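/- Let n, k be positive integers, λ a partition inside an n×k rectangle, p ∈ {0,1}, and a_i = λ_i + n - i + p/2. Then the expression (∏_{i=1}^{n} (2k+2n-2i+p)!) · (∏_{1≤i<j≤n} (a_i-a_j)(a_i+a_j)) / (∏_{i=1}^{n} (k+n-1-a_i+p/2)! (k+n-1+a_i+p/2)!) equals the determinant det[ C(2(k+i)+p, k+i-j-λ_{n-j}) ]_{i,j=0}^{n-1} of binomial coefficients, and in particular is a nonnegative integer. -/

import Mathlib

open Finset

def zchooseQ (a : ℕ) (b : ℤ) : ℚ := if 0 ≤ b then (a.choose b.toNat : ℚ) else 0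

lemma fact_asc (a d : ℕ) :
    (a.factorial : ℚ) * ∏ t ∈ Finset.range d, ((a + t + 1 : ℕ) : ℚ)
      = ((a + d).factorial : ℚ) := by
  induction d with
  | zero => simp
  | succ d ih =>
      rw [Finset.prod_range_succ, ← mul_assoc, ih, show a + (d + 1) = (a + d) + 1 from rfl,
        Nat.factorial_succ]
      push_cast
      ring

lemma flip_prod {α : Type*} (s : Finset α) (f g : α → ℚ) :
    (-1 : ℚ) ^ s.card * ∏ t ∈ s, (f t - g t) = ∏ t ∈ s, (g t - f t) := by
  have : ∀ t ∈ s, g t - f t = (-1) * (f t - g t) := fun t _ => by ring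
  rw [Finset.prod_congr rfl this, Finset.prod_mul_distrib, Finset.prod_const]

lemma keylemma (p x bj d : ℕ) (hbX : bj ≤ x + d) :
    zchooseQ (2 * x + p) ((x : ℤ) - bj)
        * (((x + d - bj).factorial : ℚ) * ((x + d + bj + p).factorial : ℚ))
      = ((2 * x + p).factorial : ℚ) * ((-1 : ℚ) ^ d *
          Polynomial.eval ((bj : ℚ) * ((bj : ℚ) + p))
            (∏ t ∈ Finset.range d,
              (Polynomial.X - Polynomial.C (((x + d - t : ℕ) : ℚ) * (((x + d - t : ℕ) : ℚ) + p))))) := by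
  have heval : Polynomial.eval ((bj : ℚ) * ((bj : ℚ) + p))
      (∏ t ∈ Finset.range d,
        (Polynomial.X - Polynomial.C (((x + d - t : ℕ) : ℚ) * (((x + d - t : ℕ) : ℚ) + p))))
      = ∏ t ∈ Finset.range d,
          ((bj : ℚ) * ((bj : ℚ) + p) - ((x + d - t : ℕ) : ℚ) * (((x + d - t : ℕ) : ℚ) + p)) := by
    rw [Polynomial.eval_prod]
    exact Finset.prod_congr rfl fun t _ => by simp
  have hflip := flip_prod (Finset.range d)
    (fun t => (bj : ℚ) * ((bj : ℚ) + p))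
    (fun t => ((x + d - t : ℕ) : ℚ) * (((x + d - t : ℕ) : ℚ) + p))
  rw [Finset.card_range] at hflip
  rw [heval, hflip]
  by_cases hc : bj ≤ x
  · have htn : ((x : ℤ) - bj).toNat = x - bj := by omega
    have h1 : zchooseQ (2 * x + p) ((x : ℤ) - bj) = ((2 * x + p).choose (x - bj) : ℚ) := by
      unfold zchooseQ
      rw [if_pos (by omega), htn]
    have hfac : ∀ t ∈ Finset.range d,
        ((x + d - t : ℕ) : ℚ) * (((x + d - t : ℕ) : ℚ) + p) - (bj : ℚ) * ((bj : ℚ) + p)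
          = (((x - bj) + (d - 1 - t) + 1 : ℕ) : ℚ) * (((x + bj + p) + (d - 1 - t) + 1 : ℕ) : ℚ) := by
      intro t ht
      rw [Finset.mem_range] at ht
      have e1 : ((x - bj) + (d - 1 - t) + 1 : ℕ) = (x + d - t) - bj := by omega
      have e2 : ((x + bj + p) + (d - 1 - t) + 1 : ℕ) = (x + d - t) + bj + p := by omega
      rw [e1, e2]
      have hb1 : bj ≤ x + d - t := by omega
      push_cast [Nat.cast_sub hb1, Nat.cast_sub (show t ≤ x + d by omega)]
      ring
    rw [Finset.prod_congr rfl hfac, Finset.prod_mul_distrib]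
    have hp1 : (∏ t ∈ Finset.range d, (((x - bj) + (d - 1 - t) + 1 : ℕ) : ℚ))
        = ∏ t ∈ Finset.range d, (((x - bj) + t + 1 : ℕ) : ℚ) :=
      Finset.prod_range_reflect (fun t => (((x - bj) + t + 1 : ℕ) : ℚ)) d
    have hp2 : (∏ t ∈ Finset.range d, (((x + bj + p) + (d - 1 - t) + 1 : ℕ) : ℚ))
        = ∏ t ∈ Finset.range d, (((x + bj + p) + t + 1 : ℕ) : ℚ) :=
      Finset.prod_range_reflect (fun t => (((x + bj + p) + t + 1 : ℕ) : ℚ)) d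
    rw [hp1, hp2, h1]
    have q1 := fact_asc (x - bj) d
    have q2 := fact_asc (x + bj + p) d
    rw [show (x - bj) + d = x + d - bj by omega] at q1
    rw [show (x + bj + p) + d = x + d + bj + p by omega] at q2
    rw [Nat.cast_choose ℚ (show x - bj ≤ 2 * x + p by omega),
      show 2 * x + p - (x - bj) = x + bj + p by omega]
    have n1 : ((x - bj).factorial : ℚ) ≠ 0 := Nat.cast_ne_zero.mpr (Nat.factorial_ne_zero _)
    have n2 : ((x + bj + p).factorial : ℚ) ≠ 0 := Nat.cast_ne_zero.mpr (Nat.factorial_ne_zero _)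
    rw [← q1, ← q2]
    field_simp
  · have h0 : zchooseQ (2 * x + p) ((x : ℤ) - bj) = 0 := by
      unfold zchooseQ
      rw [if_neg (by omega)]
    have hz : (∏ t ∈ Finset.range d,
        (((x + d - t : ℕ) : ℚ) * (((x + d - t : ℕ) : ℚ) + p) - (bj : ℚ) * ((bj : ℚ) + p))) = 0 := by
      apply Finset.prod_eq_zero (i := x + d - bj) (Finset.mem_range.mpr (by omega))
      rw [show x + d - (x + d - bj) = bj by omega]
      ring
    rw [h0, hz]; ring

lemma det_scale {n : ℕ} (c r s : Fin n → ℚ) (E : Matrix (Fin n) (Fin n) ℚ) :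
    (Matrix.of fun i j => c j * (r i * (s i * E i j))).det
      = (∏ j, c j) * ((∏ i, r i) * ((∏ i, s i) * E.det)) := by
  have h1 := Matrix.det_mul_row c (Matrix.of fun i j => r i * (s i * E i j))
  simp only [Matrix.of_apply] at h1
  have h2 := Matrix.det_mul_column r (Matrix.of fun i j => s i * E i j)
  simp only [Matrix.of_apply] at h2
  have h3 := Matrix.det_mul_column s E
  rw [h1, h2, h3]

lemma det_poly_eval {n : ℕ} (v : Fin n → ℚ) (P : Fin n → Polynomial ℚ)
    (hdeg : ∀ i : Fin n, (P i).natDegree = (i : ℕ))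
    (hmonic : ∀ i : Fin n, (P i).Monic) :
    (Matrix.of fun i j : Fin n => (P i).eval (v j)).det
      = ∏ i : Fin n, ∏ j ∈ Finset.Ioi i, (v j - v i) := by
  rw [← Matrix.det_transpose]
  have ht : (Matrix.of fun i j : Fin n => (P i).eval (v j)).transpose
      = Matrix.of fun i j : Fin n => (P j).eval (v i) := by
    ext i j; simp [Matrix.transpose_apply]
  rw [ht, ← Matrix.det_eval_matrixOfPolynomials_eq_det_vandermonde v P hdeg hmonic,
    Matrix.det_vandermonde]

lemma sign_flip {n : ℕ} (hn : 0 < n) (v : Fin n → ℚ) :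
    (∏ i : Fin n, (-1 : ℚ) ^ (i : ℕ)) * ∏ i : Fin n, ∏ j ∈ Finset.Ioi i, (v j - v i)
      = ∏ i : Fin n, ∏ j ∈ Finset.Ioi i, (v i - v j) := by
  have hflip : ∀ i : Fin n, ∏ j ∈ Finset.Ioi i, (v j - v i)
      = (-1 : ℚ) ^ (n - 1 - (i : ℕ)) * ∏ j ∈ Finset.Ioi i, (v i - v j) := by
    intro i
    have : ∀ j ∈ Finset.Ioi i, v j - v i = (-1) * (v i - v j) := fun j _ => by ring
    rw [Finset.prod_congr rfl this, Finset.prod_mul_distrib, Finset.prod_const, Fin.card_Ioi]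
  rw [Finset.prod_congr rfl (fun i _ => hflip i), Finset.prod_mul_distrib, ← mul_assoc,
    ← Finset.prod_mul_distrib]
  have h1 : ∀ i : Fin n, (-1 : ℚ) ^ (i : ℕ) * (-1 : ℚ) ^ (n - 1 - (i : ℕ)) = (-1 : ℚ) ^ (n - 1) := by
    intro i
    rw [← pow_add, show (i : ℕ) + (n - 1 - (i : ℕ)) = n - 1 by have := i.isLt; omega]
  rw [Finset.prod_congr rfl (fun i _ => h1 i), Finset.prod_const, Finset.card_univ,
    Fintype.card_fin, ← pow_mul]
  have heven : Even ((n - 1) * n) := by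
    have := Nat.even_mul_succ_self (n - 1)
    rwa [Nat.sub_add_cancel hn] at this
  rw [heven.neg_one_pow, one_mul]

/-- Type `D` multiplicity formula at `q = 1`: for `p ∈ {0,1}` and a partition `λ` inside
an `n × k` rectangle (`l i = λ_{i+1}`), with `a_i = λ_i + n - i + p/2` (writing
`b_i = λ_i + n - i`, so `a_i - a_j = b_i - b_j`, `a_i + a_j = b_i + b_j + p`,
`k+n-1-a_i+p/2 = k - λ_i + i - 1`, `k+n-1+a_i+p/2 = k+n-1+b_i+p`), the expression
`∏_i (2k+2n-2i+p)! ∏_{i<j}(a_i-a_j)(a_i+a_j) / ∏_i (k+n-1-a_i+p/2)! (k+n-1+a_i+p/2)!`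
equals the determinant `det[ C(2(k+i)+p, k+i-j-λ_{n-j}) ]`, and in particular is a
nonnegative integer. -/
theorem stmt15 (n k : ℕ) (hn : 0 < n) (hk : 0 < k) (p : ℕ) (hp : p ≤ 1)
    (l : Fin n → ℕ)
    (hl : ∀ i j : Fin n, i ≤ j → l j ≤ l i) (hbd : ∀ i, l i ≤ k) :
    (∏ i : Fin n, ((2 * k + 2 * (n - 1 - (i : ℕ)) + p).factorial : ℚ))
      * (∏ i : Fin n, ∏ j ∈ Finset.Ioi i,
          (((l i + (n - 1 - (i : ℕ))) : ℚ) - ((l j + (n - 1 - (j : ℕ))) : ℚ))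
            * (((l i + (n - 1 - (i : ℕ))) : ℚ) + ((l j + (n - 1 - (j : ℕ))) : ℚ) + p))
      / (∏ i : Fin n, ((k - l i + (i : ℕ)).factorial : ℚ)
          * ((k + 2 * (n - 1) - (i : ℕ) + l i + p).factorial : ℚ))
      = Matrix.det (Matrix.of fun i j : Fin n =>
          zchooseQ (2 * (k + (i : ℕ)) + p)
            ((k : ℤ) + (i : ℕ) - (j : ℕ) - (l j.rev : ℤ)))
    ∧ ∃ N : ℕ,
      (∏ i : Fin n, ((2 * k + 2 * (n - 1 - (i : ℕ)) + p).factorial : ℚ))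
        * (∏ i : Fin n, ∏ j ∈ Finset.Ioi i,
            (((l i + (n - 1 - (i : ℕ))) : ℚ) - ((l j + (n - 1 - (j : ℕ))) : ℚ))
              * (((l i + (n - 1 - (i : ℕ))) : ℚ) + ((l j + (n - 1 - (j : ℕ))) : ℚ) + p))
        / (∏ i : Fin n, ((k - l i + (i : ℕ)).factorial : ℚ)
            * ((k + 2 * (n - 1) - (i : ℕ) + l i + p).factorial : ℚ))
        = (N : ℚ) := by
  set v : Fin n → ℚ := fun j =>
    ((l j + (n - 1 - (j : ℕ)) : ℕ) : ℚ) * (((l j + (n - 1 - (j : ℕ)) : ℕ) : ℚ) + p) with hv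
  set P : Fin n → Polynomial ℚ := fun i =>
    ∏ t ∈ Finset.range (i : ℕ),
      (Polynomial.X - Polynomial.C (((k + (n - 1) - t : ℕ) : ℚ)
        * (((k + (n - 1) - t : ℕ) : ℚ) + p))) with hP
  set A : Matrix (Fin n) (Fin n) ℚ := Matrix.of fun i j : Fin n =>
    zchooseQ (2 * (k + (i : ℕ)) + p)
      ((k : ℤ) + (i : ℕ) - (j : ℕ) - (l j.rev : ℤ)) with hAdef
  -- Step 1: entrywise identity for the doubly reversed matrix
  have hA : A.submatrix (Fin.rev : Fin n → Fin n) (Fin.rev : Fin n → Fin n)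
      = Matrix.of (fun i j : Fin n =>
          (((k - l j + (j : ℕ)).factorial : ℚ)
              * ((k + 2 * (n - 1) - (j : ℕ) + l j + p).factorial : ℚ))⁻¹
            * (((2 * k + 2 * (n - 1 - (i : ℕ)) + p).factorial : ℚ)
              * ((-1 : ℚ) ^ (i : ℕ) * (P i).eval (v j)))) := by
    ext i j
    simp only [hAdef, Matrix.submatrix_apply, Matrix.of_apply, Fin.rev_rev]
    have hi : (i : ℕ) < n := i.isLt
    have hj : (j : ℕ) < n := j.isLt
    have hri : ((i.rev : Fin n) : ℕ) = n - 1 - (i : ℕ) := by simp [Fin.val_rev]; omega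
    have hrj : ((j.rev : Fin n) : ℕ) = n - 1 - (j : ℕ) := by simp [Fin.val_rev]; omega
    have hlb := hbd j
    set x : ℕ := k + (n - 1 - (i : ℕ)) with hx
    set bj : ℕ := l j + (n - 1 - (j : ℕ)) with hbj
    have key := keylemma p x bj (i : ℕ) (by omega)
    have hxd : x + (i : ℕ) = k + (n - 1) := by omega
    simp only [hxd] at key
    rw [show k + (n - 1) - bj = k - l j + (j : ℕ) by omega,
      show k + (n - 1) + bj + p = k + 2 * (n - 1) - (j : ℕ) + l j + p by omega] at key
    rw [show 2 * x + p = 2 * k + 2 * (n - 1 - (i : ℕ)) + p by omega] at key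
    rw [hri, hrj]
    rw [show (k : ℤ) + (↑(n - 1 - (i : ℕ)) : ℕ) - (↑(n - 1 - (j : ℕ)) : ℕ) - (l j : ℤ)
        = (x : ℤ) - bj by omega]
    rw [show 2 * (k + (n - 1 - (i : ℕ))) + p = 2 * k + 2 * (n - 1 - (i : ℕ)) + p by omega]
    rw [eq_inv_mul_iff_mul_eq₀ (by positivity)]
    linear_combination key
  -- Step 2: degrees and monicity
  have hdeg : ∀ i : Fin n, (P i).natDegree = (i : ℕ) := by
    intro i
    rw [hP]
    rw [Polynomial.natDegree_prod _ _ (fun t _ => Polynomial.X_sub_C_ne_zero _)]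
    rw [Finset.sum_congr rfl (fun t _ => Polynomial.natDegree_X_sub_C _), Finset.sum_const,
      Finset.card_range, smul_eq_mul, mul_one]
  have hmonic : ∀ i : Fin n, (P i).Monic := fun i =>
    Polynomial.monic_prod_of_monic _ _ (fun t _ => Polynomial.monic_X_sub_C _)
  -- Step 3: the determinant
  have hdetA : A.det
      = (∏ j : Fin n, (((k - l j + (j : ℕ)).factorial : ℚ)
            * ((k + 2 * (n - 1) - (j : ℕ) + l j + p).factorial : ℚ))⁻¹)
        * ((∏ i : Fin n, ((2 * k + 2 * (n - 1 - (i : ℕ)) + p).factorial : ℚ))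
          * ((∏ i : Fin n, (-1 : ℚ) ^ (i : ℕ))
            * ∏ i : Fin n, ∏ j ∈ Finset.Ioi i, (v j - v i))) := by
    rw [← Matrix.det_submatrix_equiv_self (Fin.revPerm) A]
    have hcoe : A.submatrix (⇑(Fin.revPerm : Equiv.Perm (Fin n))) ⇑(Fin.revPerm : Equiv.Perm (Fin n))
        = A.submatrix (Fin.rev : Fin n → Fin n) (Fin.rev : Fin n → Fin n) := rfl
    rw [hcoe, hA, ← det_poly_eval v P hdeg hmonic]
    exact det_scale
      (fun j => (((k - l j + (j : ℕ)).factorial : ℚ)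
        * ((k + 2 * (n - 1) - (j : ℕ) + l j + p).factorial : ℚ))⁻¹)
      (fun i => ((2 * k + 2 * (n - 1 - (i : ℕ)) + p).factorial : ℚ))
      (fun i => (-1 : ℚ) ^ (i : ℕ))
      (Matrix.of fun i j : Fin n => (P i).eval (v j))
  -- Step 4: identify the product of differences
  have hcast : ∀ i : Fin n, ((l i + (n - 1 - (i : ℕ)) : ℕ) : ℚ)
      = (l i : ℚ) + ((n : ℚ) - 1 - ((i : ℕ) : ℚ)) := by
    intro i
    have h1 : (i : ℕ) ≤ n - 1 := by have := i.isLt; omega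
    rw [Nat.cast_add, Nat.cast_sub h1, Nat.cast_sub hn, Nat.cast_one]
  have hPP : (∏ i : Fin n, (-1 : ℚ) ^ (i : ℕ))
        * ∏ i : Fin n, ∏ j ∈ Finset.Ioi i, (v j - v i)
      = ∏ i : Fin n, ∏ j ∈ Finset.Ioi i,
          (((l i + (n - 1 - (i : ℕ))) : ℚ) - ((l j + (n - 1 - (j : ℕ))) : ℚ))
            * (((l i + (n - 1 - (i : ℕ))) : ℚ) + ((l j + (n - 1 - (j : ℕ))) : ℚ) + p) := by
    rw [sign_flip hn v]
    refine Finset.prod_congr rfl fun i _ => Finset.prod_congr rfl fun j _ => ?_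
    simp only [hv]
    rw [← hcast i, ← hcast j]
    ring
  have hinv : (∏ j : Fin n, (((k - l j + (j : ℕ)).factorial : ℚ)
        * ((k + 2 * (n - 1) - (j : ℕ) + l j + p).factorial : ℚ))⁻¹)
      = (∏ i : Fin n, ((k - l i + (i : ℕ)).factorial : ℚ)
          * ((k + 2 * (n - 1) - (i : ℕ) + l i + p).factorial : ℚ))⁻¹ :=
    Finset.prod_inv_distrib _
  have hmain :
      (∏ i : Fin n, ((2 * k + 2 * (n - 1 - (i : ℕ)) + p).factorial : ℚ))
        * (∏ i : Fin n, ∏ j ∈ Finset.Ioi i,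
            (((l i + (n - 1 - (i : ℕ))) : ℚ) - ((l j + (n - 1 - (j : ℕ))) : ℚ))
              * (((l i + (n - 1 - (i : ℕ))) : ℚ) + ((l j + (n - 1 - (j : ℕ))) : ℚ) + p))
        / (∏ i : Fin n, ((k - l i + (i : ℕ)).factorial : ℚ)
            * ((k + 2 * (n - 1) - (i : ℕ) + l i + p).factorial : ℚ))
      = A.det := by
    rw [hdetA, hinv, ← hPP, div_eq_mul_inv]
    ring
  refine ⟨hmain, ?_⟩
  -- integrality and nonnegativity
  set Az : Matrix (Fin n) (Fin n) ℤ := Matrix.of fun i j : Fin n =>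
    (if (0 : ℤ) ≤ ((k : ℤ) + (i : ℕ) - (j : ℕ) - (l j.rev : ℤ))
      then ((2 * (k + (i : ℕ)) + p).choose ((k : ℤ) + (i : ℕ) - (j : ℕ) - (l j.rev : ℤ)).toNat : ℤ)
      else 0) with hAz
  have hmap : Az.map (⇑(Int.castRingHom ℚ)) = A := by
    ext i j
    simp only [hAz, hAdef, Matrix.map_apply, Matrix.of_apply, zchooseQ]
    split_ifs with h <;> simp
  have hdz : ((Az.det : ℤ) : ℚ) = A.det := by
    rw [← hmap]
    exact RingHom.map_det (Int.castRingHom ℚ) Az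
  have hnn : (0 : ℚ) ≤ A.det := by
    rw [← hmain]
    apply div_nonneg
    · apply mul_nonneg
      · exact Finset.prod_nonneg fun i _ => by positivity
      · refine Finset.prod_nonneg fun i _ => Finset.prod_nonneg fun j hj => ?_
        have hij' : i < j := Finset.mem_Ioi.mp hj
        have hij : (i : ℕ) < (j : ℕ) := hij'
        have hba : l j + (n - 1 - (j : ℕ)) ≤ l i + (n - 1 - (i : ℕ)) := by
          have := hl i j (le_of_lt hij')
          have := j.isLt
          omega
        rw [← hcast i, ← hcast j]
        apply mul_nonneg
        · rw [sub_nonneg]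
          exact_mod_cast hba
        · positivity
    · exact Finset.prod_nonneg fun i _ => by positivity
  have hAznn : 0 ≤ Az.det := by
    have : (0 : ℚ) ≤ ((Az.det : ℤ) : ℚ) := by rw [hdz]; exact hnn
    exact_mod_cast this
  refine ⟨Az.det.toNat, ?_⟩
  rw [hmain, ← hdz]
  have hfin : ((Az.det.toNat : ℕ) : ℚ) = ((Az.det : ℤ) : ℚ) := by
    exact_mod_cast Int.toNat_of_nonneg hAznn
  exact hfin.symm
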